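/- Let h_{j,j+1} be positive semidefinite nearest-neighbor terms of a translational invariant Hamiltonian H_N = Σ_j h_{j,j+1} on a periodic chain, and suppose there exists a positive definite operator X on ℂ^d such that (h ⊗ I)(I ⊗ X ⊗ I)(I ⊗ h) = (I ⊗ h)(I ⊗ X ⊗ I)(h ⊗ I) as operators on three consecutive sites. Define h' = (X^{1/2} ⊗ X^{1/2}) h (X^{1/2} ⊗ X^{1/2}). Then the new nearest-neighbor terms commute: [h'_{j-1,j} ⊗ I, I ⊗ h'_{j,j+1}] = 0 on three consecutive sites. -/

import Mathlib

open Matrix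
open scoped Kronecker ComplexOrder

/-- The square root of a positive semidefinite matrix, as defined in the older Mathlib
(`Matrix.PosSemidef.sqrt`, since removed). -/
noncomputable def Matrix.PosSemidef.sqrt {n 𝕜 : Type*} [Fintype n] [RCLike 𝕜] [DecidableEq n]
    {A : Matrix n n 𝕜} (hA : A.PosSemidef) : Matrix n n 𝕜 :=
  hA.1.eigenvectorUnitary.1 * diagonal ((↑) ∘ Real.sqrt ∘ hA.1.eigenvalues) *
  (star hA.1.eigenvectorUnitary : Matrix n n 𝕜)

lemma Matrix.PosSemidef.sqrt_mul_self' {n 𝕜 : Type*} [Fintype n] [RCLike 𝕜] [DecidableEq n]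
    {A : Matrix n n 𝕜} (hA : A.PosSemidef) : hA.sqrt * hA.sqrt = A := by
  have hU : (star hA.1.eigenvectorUnitary : Matrix n n 𝕜) * hA.1.eigenvectorUnitary.1 = 1 :=
    Unitary.coe_star_mul_self _
  conv_rhs => rw [hA.1.spectral_theorem]
  simp only [Matrix.PosSemidef.sqrt, Unitary.conjStarAlgAut_apply]
  rw [show ∀ a b c d e f : Matrix n n 𝕜, a * b * c * (d * e * f) = a * (b * (c * d) * e) * f by
    intros; simp only [mul_assoc], hU, mul_one, diagonal_mul_diagonal]
  congr 3
  ext i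
  simp only [Function.comp_apply]
  rw [← RCLike.ofReal_mul, Real.mul_self_sqrt (hA.eigenvalues_nonneg i)]


lemma aux17 (d : ℕ) (h : Matrix (Fin d × Fin d) (Fin d × Fin d) ℂ)
    (X Y : Matrix (Fin d) (Fin d) ℂ) (hYY : Y * Y = X)
    (hinter :
      ((h ⊗ₖ (1 : Matrix (Fin d) (Fin d) ℂ)).submatrix
          (Equiv.prodAssoc (Fin d) (Fin d) (Fin d)).symm
          (Equiv.prodAssoc (Fin d) (Fin d) (Fin d)).symm) *
        ((1 : Matrix (Fin d) (Fin d) ℂ) ⊗ₖ (X ⊗ₖ (1 : Matrix (Fin d) (Fin d) ℂ))) *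
        ((1 : Matrix (Fin d) (Fin d) ℂ) ⊗ₖ h)
      = ((1 : Matrix (Fin d) (Fin d) ℂ) ⊗ₖ h) *
        ((1 : Matrix (Fin d) (Fin d) ℂ) ⊗ₖ (X ⊗ₖ (1 : Matrix (Fin d) (Fin d) ℂ))) *
        ((h ⊗ₖ (1 : Matrix (Fin d) (Fin d) ℂ)).submatrix
          (Equiv.prodAssoc (Fin d) (Fin d) (Fin d)).symm
          (Equiv.prodAssoc (Fin d) (Fin d) (Fin d)).symm)) :
    ((((Y ⊗ₖ Y) * h * (Y ⊗ₖ Y)) ⊗ₖ (1 : Matrix (Fin d) (Fin d) ℂ)).submatrix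
        (Equiv.prodAssoc (Fin d) (Fin d) (Fin d)).symm
        (Equiv.prodAssoc (Fin d) (Fin d) (Fin d)).symm) *
      ((1 : Matrix (Fin d) (Fin d) ℂ) ⊗ₖ ((Y ⊗ₖ Y) * h * (Y ⊗ₖ Y)))
    = ((1 : Matrix (Fin d) (Fin d) ℂ) ⊗ₖ ((Y ⊗ₖ Y) * h * (Y ⊗ₖ Y))) *
      ((((Y ⊗ₖ Y) * h * (Y ⊗ₖ Y)) ⊗ₖ (1 : Matrix (Fin d) (Fin d) ℂ)).submatrix
        (Equiv.prodAssoc (Fin d) (Fin d) (Fin d)).symm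
        (Equiv.prodAssoc (Fin d) (Fin d) (Fin d)).symm) := by
  set σ := (Equiv.prodAssoc (Fin d) (Fin d) (Fin d)).symm with hσ
  set I1 : Matrix (Fin d) (Fin d) ℂ := 1 with hI1
  set I2 : Matrix (Fin d × Fin d) (Fin d × Fin d) ℂ := 1 with hI2
  set A := (h ⊗ₖ I1).submatrix σ σ with hA
  set B := I1 ⊗ₖ h with hB
  set M := I1 ⊗ₖ (X ⊗ₖ I1) with hM
  set P := Y ⊗ₖ (Y ⊗ₖ I1) with hP
  set Q := I1 ⊗ₖ (Y ⊗ₖ Y) with hQ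
  set R1 := Y ⊗ₖ I2 with hR1
  set R3 := I1 ⊗ₖ (I1 ⊗ₖ Y) with hR3
  have mulσ : ∀ (M N : Matrix ((Fin d × Fin d) × Fin d) ((Fin d × Fin d) × Fin d) ℂ),
      M.submatrix σ σ * N.submatrix σ σ = (M * N).submatrix σ σ := fun M N =>
    submatrix_mul_equiv M N σ σ σ
  have hI2' : I2 = I1 ⊗ₖ I1 := by rw [hI1, hI2, one_kronecker_one]
  have hsubP : ((Y ⊗ₖ Y) ⊗ₖ I1).submatrix σ σ = P := by
    rw [hP, hσ, ← kronecker_assoc']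
  have hsub3 : (I2 ⊗ₖ Y).submatrix σ σ = R3 := by
    rw [hI2', hR3, hσ, ← kronecker_assoc']
  have hdecomp : ((Y ⊗ₖ Y) * h * (Y ⊗ₖ Y)) ⊗ₖ I1
      = ((Y ⊗ₖ Y) ⊗ₖ I1) * (h ⊗ₖ I1) * ((Y ⊗ₖ Y) ⊗ₖ I1) := by
    rw [← mul_kronecker_mul, ← mul_kronecker_mul]
    simp [hI1]
  have hL : (((Y ⊗ₖ Y) * h * (Y ⊗ₖ Y)) ⊗ₖ I1).submatrix σ σ = P * A * P := by
    rw [hdecomp, ← mulσ, ← mulσ, hsubP, hA]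
  have hR : I1 ⊗ₖ ((Y ⊗ₖ Y) * h * (Y ⊗ₖ Y)) = Q * B * Q := by
    rw [hQ, hB, ← mul_kronecker_mul, ← mul_kronecker_mul]
    simp [hI1]
  have c1 : A * R3 = R3 * A := by
    rw [hA, ← hsub3, mulσ, mulσ]
    simp [← mul_kronecker_mul, hI1, hI2]
  have c2 : R1 * B = B * R1 := by
    rw [hB, hR1]
    simp [← mul_kronecker_mul, hI1, hI2]
  have e1 : P * Q = R3 * (M * R1) := by
    rw [hP, hQ, hR3, hM, hR1]
    simp [← mul_kronecker_mul, hI1, hI2, hYY]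
  have e2 : R1 * (M * R3) = Q * P := by
    rw [hP, hQ, hR3, hM, hR1]
    simp [← mul_kronecker_mul, hI1, hI2, hYY]
  have e3 : P * R3 = Q * R1 := by
    rw [hP, hQ, hR3, hR1]
    simp [← mul_kronecker_mul, hI1, hI2]
  have e4 : R1 * Q = R3 * P := by
    rw [hP, hQ, hR3, hR1]
    simp [← mul_kronecker_mul, hI1, hI2]
  rw [hL, hR]
  calc P * A * P * (Q * B * Q)
      = P * (A * (P * Q) * B) * Q := by simp only [mul_assoc]
    _ = P * (A * (R3 * (M * R1)) * B) * Q := by rw [e1]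
    _ = P * R3 * (A * M * B) * (R1 * Q) := by
        rw [show A * (R3 * (M * R1)) * B = A * R3 * M * (R1 * B) by
          simp only [mul_assoc], c1, c2]
        simp only [mul_assoc]
    _ = Q * R1 * (B * M * A) * (R3 * P) := by rw [e3, e4, hinter]
    _ = Q * (R1 * B * M * (A * R3)) * P := by simp only [mul_assoc]
    _ = Q * (B * R1 * M * (R3 * A)) * P := by rw [c1, c2]
    _ = Q * B * Q * (P * A * P) := by
        rw [show B * R1 * M * (R3 * A) = B * (R1 * (M * R3)) * A by
          simp only [mul_assoc], e2]
        simp only [mul_assoc]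

theorem stmt_17 (d : ℕ) (h : Matrix (Fin d × Fin d) (Fin d × Fin d) ℂ)
    (hh : h.PosSemidef) (X : Matrix (Fin d) (Fin d) ℂ) (hX : X.PosDef)
    (hinter :
      ((h ⊗ₖ (1 : Matrix (Fin d) (Fin d) ℂ)).submatrix
          (Equiv.prodAssoc (Fin d) (Fin d) (Fin d)).symm
          (Equiv.prodAssoc (Fin d) (Fin d) (Fin d)).symm) *
        ((1 : Matrix (Fin d) (Fin d) ℂ) ⊗ₖ (X ⊗ₖ (1 : Matrix (Fin d) (Fin d) ℂ))) *
        ((1 : Matrix (Fin d) (Fin d) ℂ) ⊗ₖ h)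
      = ((1 : Matrix (Fin d) (Fin d) ℂ) ⊗ₖ h) *
        ((1 : Matrix (Fin d) (Fin d) ℂ) ⊗ₖ (X ⊗ₖ (1 : Matrix (Fin d) (Fin d) ℂ))) *
        ((h ⊗ₖ (1 : Matrix (Fin d) (Fin d) ℂ)).submatrix
          (Equiv.prodAssoc (Fin d) (Fin d) (Fin d)).symm
          (Equiv.prodAssoc (Fin d) (Fin d) (Fin d)).symm)) :
    ((((hX.posSemidef.sqrt ⊗ₖ hX.posSemidef.sqrt) * h *
        (hX.posSemidef.sqrt ⊗ₖ hX.posSemidef.sqrt)) ⊗ₖ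
          (1 : Matrix (Fin d) (Fin d) ℂ)).submatrix
        (Equiv.prodAssoc (Fin d) (Fin d) (Fin d)).symm
        (Equiv.prodAssoc (Fin d) (Fin d) (Fin d)).symm) *
      ((1 : Matrix (Fin d) (Fin d) ℂ) ⊗ₖ
        ((hX.posSemidef.sqrt ⊗ₖ hX.posSemidef.sqrt) * h *
          (hX.posSemidef.sqrt ⊗ₖ hX.posSemidef.sqrt)))
    = ((1 : Matrix (Fin d) (Fin d) ℂ) ⊗ₖ
        ((hX.posSemidef.sqrt ⊗ₖ hX.posSemidef.sqrt) * h *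
          (hX.posSemidef.sqrt ⊗ₖ hX.posSemidef.sqrt))) *
      ((((hX.posSemidef.sqrt ⊗ₖ hX.posSemidef.sqrt) * h *
          (hX.posSemidef.sqrt ⊗ₖ hX.posSemidef.sqrt)) ⊗ₖ
            (1 : Matrix (Fin d) (Fin d) ℂ)).submatrix
        (Equiv.prodAssoc (Fin d) (Fin d) (Fin d)).symm
        (Equiv.prodAssoc (Fin d) (Fin d) (Fin d)).symm) :=
  aux17 d h X hX.posSemidef.sqrt hX.posSemidef.sqrt_mul_self' hinter
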